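/- With the setup of the previous statement ($n = 2m$, $a = (0^{m-\ell}, 1^\ell)$), there exists a standard filling $\mathbf{T}$ of $\boldsymbol{\eta}_a$ with exactly $M = \sum_{i=1}^{\ell}(m - i)$ inversions; namely the filling in which, for $0 \leq \alpha \leq m - \ell - 1$, the numbers $\alpha + 1$ and $m + \ell + \alpha + 1$ appear in the $\alpha$-th (horizontal) domino, and for $m - \ell \leq \alpha \leq m - 1$, the numbers $\alpha + 1$ and $\alpha + \ell + 1$ appear in the $\alpha$-th (vertical) domino. -/
import Mathlib


/-- Shifted content `c̃ = m·c + i` of the content-`c` cell of the `i`-th domino. -/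
def dshift (m : ℕ) (x : Fin m × Fin 2) : ℕ := m * (x.2 : ℕ) + (x.1 : ℕ)

/-- Inversions: pairs of cells `(x,y)` with `0 < c̃(y) - c̃(x) < m`, `T(x) > T(y)`. -/
def dinv (m : ℕ) (T : (Fin m × Fin 2) ≃ Fin (2 * m)) : ℕ :=
  (Finset.univ.filter (fun p : (Fin m × Fin 2) × (Fin m × Fin 2) =>
    dshift m p.1 < dshift m p.2 ∧ dshift m p.2 < dshift m p.1 + m ∧
      T p.2 < T p.1)).card

/-- Standardness for `η_a`, `a = (0^{m-l},1^l)`: each domino increases along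
its row / up its column. -/
def dstd (m l : ℕ) (T : (Fin m × Fin 2) ≃ Fin (2 * m)) : Prop :=
  ∀ i : Fin m, if (i : ℕ) < m - l then T (i, 0) < T (i, 1) else T (i, 1) < T (i, 0)

/-- The explicit filling. -/
def Fdef (m l : ℕ) (hl : l ≤ m) (x : Fin m × Fin 2) : Fin (2 * m) :=
  ⟨if (x.2 : ℕ) = 0 then (if (x.1 : ℕ) < m - l then (x.1 : ℕ) else (x.1 : ℕ) + l)
    else (if (x.1 : ℕ) < m - l then m + l + (x.1 : ℕ) else (x.1 : ℕ)),
   by have h1 := x.1.isLt; split_ifs <;> omega⟩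

lemma Fdef_bij (m l : ℕ) (hl : l ≤ m) : Function.Bijective (Fdef m l hl) := by
  rw [Fintype.bijective_iff_injective_and_card]
  constructor
  · rintro ⟨i, c⟩ ⟨j, d⟩ hxy
    have hi := i.isLt; have hj := j.isLt
    have hc := c.isLt; have hd := d.isLt
    simp only [Fdef, Fin.mk.injEq] at hxy
    have hc2 : (c : ℕ) = 0 ∨ (c : ℕ) = 1 := by omega
    have hd2 : (d : ℕ) = 0 ∨ (d : ℕ) = 1 := by omega
    simp only [Prod.mk.injEq, Fin.ext_iff]
    rcases hc2 with hc2 | hc2 <;> rcases hd2 with hd2 | hd2 <;>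
      simp only [hc2, hd2] at hxy <;>
      split_ifs at hxy <;>
      first | omega | exact (‹False›).elim
  · simp [mul_comm]

lemma sum_sub_shift (h l n : ℕ) (hn : n = h + l) :
    ∑ k ∈ Finset.range n, (k - h) = ∑ t ∈ Finset.range l, t := by
  subst hn
  induction l with
  | zero => exact Finset.sum_eq_zero fun k hk => by simp at hk ⊢; omega
  | succ n ih =>
      rw [Nat.add_succ, Finset.sum_range_succ, ih, Finset.sum_range_succ]
      congr 1; omega

lemma count_Ico (a b n : ℕ) :
    (∑ j ∈ Finset.range n, if a ≤ j ∧ j < b then 1 else 0) = min b n - a := by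
  classical
  rw [← Finset.card_filter]
  have h : (Finset.range n).filter (fun j => a ≤ j ∧ j < b) = Finset.Ico a (min b n) := by
    ext j; simp only [Finset.mem_filter, Finset.mem_range, Finset.mem_Ico]; omega
  rw [h, Nat.card_Ico]

lemma count_ge (a n : ℕ) : (∑ j ∈ Finset.range n, if a ≤ j then 1 else 0) = n - a := by
  classical
  rw [← Finset.card_filter]
  have h : (Finset.range n).filter (fun j => a ≤ j) = Finset.Ico a n := by
    ext j; simp only [Finset.mem_filter, Finset.mem_range, Finset.mem_Ico]; omega
  rw [h, Nat.card_Ico]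

lemma count_lt (a n c : ℕ) :
    (∑ i ∈ Finset.range n, if i < a then c else 0) = min a n * c := by
  classical
  rw [Finset.sum_ite, Finset.sum_const, Finset.sum_const_zero, add_zero]
  have h : (Finset.range n).filter (fun i => i < a) = Finset.range (min a n) := by
    ext j; simp only [Finset.mem_filter, Finset.mem_range, lt_min_iff]; omega
  rw [h, Finset.card_range, smul_eq_mul]

set_option maxHeartbeats 1000000 in
lemma Fdef_dinv (m l : ℕ) (hm : 1 ≤ m) (hl : l ≤ m) :
    dinv m (Equiv.ofBijective _ (Fdef_bij m l hl)) = ∑ i ∈ Finset.range l, (m - (i + 1)) := by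
  unfold dinv
  rw [Finset.card_filter]
  simp only [Fintype.sum_prod_type, Fin.sum_univ_two, Equiv.ofBijective_apply, dshift, Fdef,
    Fin.val_zero, Fin.val_one, Fin.lt_def, mul_zero, mul_one, zero_add, if_true,
    one_ne_zero, if_false, reduceIte]
  trans ∑ i : Fin m, ∑ j : Fin m, ((if m - l ≤ (j : ℕ) ∧ (j : ℕ) < (i : ℕ) then 1 else 0)
        + (if (i : ℕ) < m - l ∧ m - l ≤ (j : ℕ) then 1 else 0))
  · refine Finset.sum_congr rfl fun i _ => ?_
    rw [← Finset.sum_add_distrib]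
    refine Finset.sum_congr rfl fun j _ => ?_
    have hi := i.isLt; have hj := j.isLt
    by_cases h1 : (i : ℕ) < m - l <;> by_cases h2 : (j : ℕ) < m - l <;>
      simp only [h1, h2, if_true, if_false, true_and, false_and, and_true, and_false] <;>
      split_ifs <;> omega
  · trans ∑ i ∈ Finset.range m, ∑ j ∈ Finset.range m, ((if m - l ≤ j ∧ j < i then 1 else 0)
        + (if i < m - l ∧ m - l ≤ j then 1 else 0))
    · rw [← Fin.sum_univ_eq_sum_range]
      refine Finset.sum_congr rfl fun i _ => ?_
      rw [← Fin.sum_univ_eq_sum_range]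
    trans ∑ i ∈ Finset.range m, ((i - (m - l)) + (if i < m - l then m - (m - l) else 0))
    · refine Finset.sum_congr rfl fun i hi => ?_
      simp only [Finset.mem_range] at hi
      rw [Finset.sum_add_distrib, count_Ico, min_eq_left hi.le]
      congr 1
      by_cases hc : i < m - l
      · simp only [hc, true_and, count_ge, if_true]
      · simp [hc]
    · rw [Finset.sum_add_distrib, sum_sub_shift (m - l) l m (by omega), count_lt,
        min_eq_left (by omega : m - l ≤ m)]
      have h3 : ∀ i ∈ Finset.range l, m - (i + 1) = (m - l) + (l - 1 - i) := by
        intro i hi; simp only [Finset.mem_range] at hi; omega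
      rw [Finset.sum_congr rfl h3, Finset.sum_add_distrib, Finset.sum_const,
        Finset.card_range, smul_eq_mul]
      have h4 : ∑ i ∈ Finset.range l, (l - 1 - i) = ∑ i ∈ Finset.range l, i :=
        Finset.sum_range_reflect (fun i => i) l
      rw [h4]
      have h5 : m - (m - l) = l := by omega
      rw [h5, mul_comm (m - l) l]
      omega

/-- there is a standard filling of the tuple of `m - l` horizontal
and `l` vertical dominoes attaining exactly `M = ∑_{i=1}^{l}(m-i)` inversions,
namely the one in which the `α`-th horizontal domino (`0 ≤ α ≤ m-l-1`) holds the
numbers `α+1` and `m+l+α+1`, and the `α`-th vertical domino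
(`m-l ≤ α ≤ m-1`) holds `α+1` and `α+l+1` (entries written `1,…,2m`;
zero-indexed below). -/
theorem stmt12 (m l : ℕ) (hm : 1 ≤ m) (hl : l ≤ m) :
    ∃ T : (Fin m × Fin 2) ≃ Fin (2 * m), dstd m l T ∧
      (∀ α : Fin m, (α : ℕ) < m - l →
        ({((T (α, 0)) : ℕ), ((T (α, 1)) : ℕ)} : Finset ℕ)
          = {(α : ℕ), m + l + (α : ℕ)}) ∧
      (∀ α : Fin m, m - l ≤ (α : ℕ) →
        ({((T (α, 0)) : ℕ), ((T (α, 1)) : ℕ)} : Finset ℕ)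
          = {(α : ℕ), (α : ℕ) + l}) ∧
      dinv m T = ∑ i ∈ Finset.range l, (m - (i + 1)) := by
  refine ⟨Equiv.ofBijective _ (Fdef_bij m l hl), ?_, ?_, ?_, Fdef_dinv m l hm hl⟩
  · intro i
    have hi := i.isLt
    simp only [Equiv.ofBijective_apply, Fdef, Fin.lt_def, Fin.val_zero, Fin.val_one]
    split_ifs <;> first | omega | exact (‹False›).elim
  · intro α hα
    simp only [Equiv.ofBijective_apply, Fdef, Fin.val_zero, Fin.val_one, if_pos hα,
      one_ne_zero, if_false, if_true, reduceIte]
  · intro α hα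
    have hα' : ¬ ((α : ℕ) < m - l) := not_lt.mpr hα
    simp only [Equiv.ofBijective_apply, Fdef, Fin.val_zero, Fin.val_one, if_neg hα',
      one_ne_zero, if_false, if_true, reduceIte]
    exact Finset.pair_comm _ _
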